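/- There is no genuinely quantum Latin square of order 2 or of order 3; that is, every QLS(2) has cardinality exactly 2 and every QLS(3) has cardinality exactly 3. -/

import Mathlib

noncomputable section

/-- The `n`-dimensional complex Hilbert space `ℋ_n`. -/
abbrev Hs (n : ℕ) := EuclideanSpace ℂ (Fin n)

/-- Two vectors are identified when they differ by a global phase `e^{iθ}`. -/
def PhaseEq {E : Type*} [AddCommGroup E] [Module ℂ E] (u v : E) : Prop :=
  ∃ θ : ℝ, u = Complex.exp (θ * Complex.I) • v

/-- A quantum Latin square of order `n`: each row and each column is an
orthonormal family of `n` vectors in `ℋ_n`, hence an orthonormal basis. -/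
def IsQLS {n : ℕ} (M : Fin n → Fin n → Hs n) : Prop :=
  (∀ i, Orthonormal ℂ (fun j => M i j)) ∧ (∀ j, Orthonormal ℂ (fun i => M i j))

/-- The family `f` has exactly `c` distinct members up to global phase. -/
def FamCardEq {ι E : Type*} [AddCommGroup E] [Module ℂ E] (f : ι → E) (c : ℕ) : Prop :=
  ∃ reps : Fin c → E,
    (∀ i, ∃ k, PhaseEq (f i) (reps k)) ∧
    (∀ k, ∃ i, PhaseEq (f i) (reps k)) ∧
    (∀ k l, k ≠ l → ¬ PhaseEq (reps k) (reps l))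

/-- The cardinality of a quantum Latin square is `c`. -/
def CardEq {n : ℕ} (M : Fin n → Fin n → Hs n) (c : ℕ) : Prop :=
  FamCardEq (fun p : Fin n × Fin n => M p.1 p.2) c

open Complex

local notation "⟪" x ", " y "⟫" => @inner ℂ _ _ x y

def onb {n : ℕ} (hn : 0 < n) {v : Fin n → Hs n} (hv : Orthonormal ℂ v) :
    OrthonormalBasis (Fin n) ℂ (Hs n) :=
  have : Nonempty (Fin n) := ⟨⟨0, hn⟩⟩
  (basisOfOrthonormalOfCardEqFinrank hv (by simp)).toOrthonormalBasis
    (by rwa [coe_basisOfOrthonormalOfCardEqFinrank])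

@[simp] lemma onb_apply {n : ℕ} (hn : 0 < n) {v : Fin n → Hs n} (hv : Orthonormal ℂ v) (i : Fin n) :
    onb hn hv i = v i := by
  have : Nonempty (Fin n) := ⟨⟨0, hn⟩⟩
  simp [onb, Module.Basis.coe_toOrthonormalBasis, coe_basisOfOrthonormalOfCardEqFinrank]

lemma phase_of_coords {ι : Type*} [Fintype ι] [DecidableEq ι]
    {E : Type*} [NormedAddCommGroup E] [InnerProductSpace ℂ E]
    (b : OrthonormalBasis ι ℂ E) (v : E) (hv : ‖v‖ = 1) (k₀ : ι)
    (h : ∀ k, k ≠ k₀ → ⟪b k, v⟫ = 0) : PhaseEq v (b k₀) := by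
  have hrep : v = ⟪b k₀, v⟫ • b k₀ := by
    conv_lhs => rw [← b.sum_repr' v]
    rw [Finset.sum_eq_single k₀]
    · intro k _ hk
      rw [h k hk, zero_smul]
    · intro hk; exact absurd (Finset.mem_univ k₀) hk
  set c := ⟪b k₀, v⟫
  have hc : ‖c‖ = 1 := by
    have := congrArg norm hrep
    rw [hv, norm_smul, b.orthonormal.1 k₀, mul_one] at this
    simpa using this.symm
  have hce : Complex.exp (↑c.arg * I) = c := by
    conv_rhs => rw [← Complex.norm_mul_exp_arg_mul_I c]
    rw [hc, ofReal_one, one_mul]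
  exact ⟨c.arg, by rw [hrep, hce]⟩

lemma not_phaseEq_of_inner_zero {E : Type*} [NormedAddCommGroup E] [InnerProductSpace ℂ E]
    {u v : E} (hu : ‖u‖ = 1) (huv : ⟪u, v⟫ = 0) : ¬ PhaseEq u v := by
  rintro ⟨θ, hθ⟩
  have : ⟪u, u⟫ = 0 := by
    rw [hθ] at huv ⊢
    rw [inner_smul_right, huv, mul_zero]
  rw [inner_self_eq_zero] at this
  rw [this, norm_zero] at hu
  norm_num at hu

lemma inner_zero_of_phaseEq_left {E : Type*} [NormedAddCommGroup E] [InnerProductSpace ℂ E]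
    {u w v : E} (h : PhaseEq u w) (huv : ⟪v, u⟫ = 0) : ⟪v, w⟫ = 0 := by
  obtain ⟨θ, rfl⟩ := h
  rw [inner_smul_right] at huv
  exact (mul_eq_zero.1 huv).resolve_left (Complex.exp_ne_zero _)

lemma phaseEq_refl {E : Type*} [AddCommGroup E] [Module ℂ E] (u : E) : PhaseEq u u :=
  ⟨0, by simp⟩

/-- There is no genuinely quantum Latin square of order 2 or 3: every QLS(2)
has cardinality exactly 2 and every QLS(3) has cardinality exactly 3. -/
theorem qls2_qls3_apparently_quantum :
    (∀ M : Fin 2 → Fin 2 → Hs 2, IsQLS M → CardEq M 2) ∧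
    (∀ M : Fin 3 → Fin 3 → Hs 3, IsQLS M → CardEq M 3) := by
  constructor
  · -- order 2
    intro M hQ
    obtain ⟨hr, hc⟩ := hQ
    set b : OrthonormalBasis (Fin 2) ℂ (Hs 2) := onb (by norm_num) (hr 0) with hbdef
    have hb : ∀ k, b k = M 0 k := fun k => onb_apply _ _ k
    have key : ∀ i j : Fin 2, ∃ k, PhaseEq (M i j) (M 0 k) := by
      have h10 : PhaseEq (M 1 0) (b 1) := by
        refine phase_of_coords b _ ((hr 1).1 0) 1 ?_
        intro k hk
        fin_cases k
        · rw [hb]; exact (hc 0).2 (by decide : (0 : Fin 2) ≠ 1)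
        · exact absurd rfl hk
      have h11 : PhaseEq (M 1 1) (b 0) := by
        refine phase_of_coords b _ ((hr 1).1 1) 0 ?_
        intro k hk
        fin_cases k
        · exact absurd rfl hk
        · rw [hb]; exact (hc 1).2 (by decide : (0 : Fin 2) ≠ 1)
      intro i j
      fin_cases i <;> fin_cases j
      · exact ⟨0, phaseEq_refl _⟩
      · exact ⟨1, phaseEq_refl _⟩
      · exact ⟨1, hb 1 ▸ h10⟩
      · exact ⟨0, hb 0 ▸ h11⟩
    refine ⟨fun k => M 0 k, fun p => key p.1 p.2, fun k => ⟨(0, k), phaseEq_refl _⟩, ?_⟩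
    intro k l hkl
    exact not_phaseEq_of_inner_zero ((hr 0).1 k) ((hr 0).2 hkl)
  · -- order 3
    intro M hQ
    obtain ⟨hr, hc⟩ := hQ
    set b : OrthonormalBasis (Fin 3) ℂ (Hs 3) := onb (by norm_num) (hr 0) with hbdef
    have hb : ∀ k, b k = M 0 k := fun k => onb_apply _ _ k
    -- column orthogonality with row 0
    have hcol : ∀ (j : Fin 3) (i : Fin 3), i ≠ 0 → ⟪b j, M i j⟫ = 0 := by
      intro j i hi
      rw [hb]
      exact (hc j).2 (Ne.symm hi)
    have h10a : ⟪b 0, M 1 0⟫ = 0 := hcol 0 1 (by decide)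
    have h11b : ⟪b 1, M 1 1⟫ = 0 := hcol 1 1 (by decide)
    have h12c : ⟪b 2, M 1 2⟫ = 0 := hcol 2 1 (by decide)
    -- Parseval overlap between M 1 0 and M 1 1
    have hdisj : ⟪b 2, M 1 0⟫ = 0 ∨ ⟪b 2, M 1 1⟫ = 0 := by
      have hp := b.sum_inner_mul_inner (M 1 0) (M 1 1)
      rw [Fin.sum_univ_three] at hp
      rw [(inner_eq_zero_symm).1 h10a, h11b, zero_mul, mul_zero] at hp
      simp only [zero_add] at hp
      have hrow : ⟪M 1 0, M 1 1⟫ = 0 := (hr 1).2 (by decide : (0 : Fin 3) ≠ 1)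
      rw [hrow] at hp
      rcases mul_eq_zero.1 hp with h | h
      · exact Or.inl ((inner_eq_zero_symm).1 h)
      · exact Or.inr h
    -- helper to finish an entry: unit vector orthogonal to two basis vectors
    have fin3 : ∀ (v : Hs 3) (hv : ‖v‖ = 1) (k₀ : Fin 3),
        (∀ k, k ≠ k₀ → ⟪b k, v⟫ = 0) → PhaseEq v (M 0 k₀) := by
      intro v hv k₀ h
      have := phase_of_coords b v hv k₀ h
      rwa [hb] at this
    have key : ∀ i j : Fin 3, ∃ k, PhaseEq (M i j) (M 0 k) := by
      -- generic final step given phase classes of row 1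
      rcases hdisj with hA | hB
      · -- Case A : M10 ~ b1, M12 ~ b0, M11 ~ b2
        have p10 : PhaseEq (M 1 0) (M 0 1) := by
          refine fin3 _ ((hr 1).1 0) 1 ?_
          intro k hk; fin_cases k
          · exact h10a
          · exact absurd rfl hk
          · exact hA
        have p12 : PhaseEq (M 1 2) (M 0 0) := by
          refine fin3 _ ((hr 1).1 2) 0 ?_
          intro k hk; fin_cases k
          · exact absurd rfl hk
          · -- ⟪b 1, M 1 2⟫ = 0 since M 1 2 ⊥ M 1 0 ~ M 0 1 = b 1
            rw [hb]
            exact (inner_eq_zero_symm).1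
              (inner_zero_of_phaseEq_left p10 ((hr 1).2 (by decide : (2 : Fin 3) ≠ 0)))
          · exact h12c
        have p11 : PhaseEq (M 1 1) (M 0 2) := by
          refine fin3 _ ((hr 1).1 1) 2 ?_
          intro k hk; fin_cases k
          · rw [hb]
            exact (inner_eq_zero_symm).1
              (inner_zero_of_phaseEq_left p12 ((hr 1).2 (by decide : (1 : Fin 3) ≠ 2)))
          · exact h11b
          · exact absurd rfl hk
        -- row 2
        have p20 : PhaseEq (M 2 0) (M 0 2) := by
          refine fin3 _ ((hr 2).1 0) 2 ?_
          intro k hk; fin_cases k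
          · exact hcol 0 2 (by decide)
          · rw [hb]
            exact (inner_eq_zero_symm).1
              (inner_zero_of_phaseEq_left p10 ((hc 0).2 (by decide : (2 : Fin 3) ≠ 1)))
          · exact absurd rfl hk
        have p21 : PhaseEq (M 2 1) (M 0 0) := by
          refine fin3 _ ((hr 2).1 1) 0 ?_
          intro k hk; fin_cases k
          · exact absurd rfl hk
          · exact hcol 1 2 (by decide)
          · rw [hb]
            exact (inner_eq_zero_symm).1
              (inner_zero_of_phaseEq_left p11 ((hc 1).2 (by decide : (2 : Fin 3) ≠ 1)))
        have p22 : PhaseEq (M 2 2) (M 0 1) := by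
          refine fin3 _ ((hr 2).1 2) 1 ?_
          intro k hk; fin_cases k
          · rw [hb]
            exact (inner_eq_zero_symm).1
              (inner_zero_of_phaseEq_left p12 ((hc 2).2 (by decide : (2 : Fin 3) ≠ 1)))
          · exact absurd rfl hk
          · exact hcol 2 2 (by decide)
        intro i j
        fin_cases i <;> fin_cases j
        · exact ⟨0, phaseEq_refl _⟩
        · exact ⟨1, phaseEq_refl _⟩
        · exact ⟨2, phaseEq_refl _⟩
        · exact ⟨1, p10⟩
        · exact ⟨2, p11⟩
        · exact ⟨0, p12⟩
        · exact ⟨2, p20⟩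
        · exact ⟨0, p21⟩
        · exact ⟨1, p22⟩
      · -- Case B : M11 ~ b0, M12 ~ b1, M10 ~ b2
        have p11 : PhaseEq (M 1 1) (M 0 0) := by
          refine fin3 _ ((hr 1).1 1) 0 ?_
          intro k hk; fin_cases k
          · exact absurd rfl hk
          · exact h11b
          · exact hB
        have p12 : PhaseEq (M 1 2) (M 0 1) := by
          refine fin3 _ ((hr 1).1 2) 1 ?_
          intro k hk; fin_cases k
          · rw [hb]
            exact (inner_eq_zero_symm).1
              (inner_zero_of_phaseEq_left p11 ((hr 1).2 (by decide : (2 : Fin 3) ≠ 1)))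
          · exact absurd rfl hk
          · exact h12c
        have p10 : PhaseEq (M 1 0) (M 0 2) := by
          refine fin3 _ ((hr 1).1 0) 2 ?_
          intro k hk; fin_cases k
          · exact h10a
          · rw [hb]
            exact (inner_eq_zero_symm).1
              (inner_zero_of_phaseEq_left p12 ((hr 1).2 (by decide : (0 : Fin 3) ≠ 2)))
          · exact absurd rfl hk
        have p20 : PhaseEq (M 2 0) (M 0 1) := by
          refine fin3 _ ((hr 2).1 0) 1 ?_
          intro k hk; fin_cases k
          · exact hcol 0 2 (by decide)
          · exact absurd rfl hk
          · rw [hb]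
            exact (inner_eq_zero_symm).1
              (inner_zero_of_phaseEq_left p10 ((hc 0).2 (by decide : (2 : Fin 3) ≠ 1)))
        have p21 : PhaseEq (M 2 1) (M 0 2) := by
          refine fin3 _ ((hr 2).1 1) 2 ?_
          intro k hk; fin_cases k
          · rw [hb]
            exact (inner_eq_zero_symm).1
              (inner_zero_of_phaseEq_left p11 ((hc 1).2 (by decide : (2 : Fin 3) ≠ 1)))
          · exact hcol 1 2 (by decide)
          · exact absurd rfl hk
        have p22 : PhaseEq (M 2 2) (M 0 0) := by
          refine fin3 _ ((hr 2).1 2) 0 ?_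
          intro k hk; fin_cases k
          · exact absurd rfl hk
          · rw [hb]
            exact (inner_eq_zero_symm).1
              (inner_zero_of_phaseEq_left p12 ((hc 2).2 (by decide : (2 : Fin 3) ≠ 1)))
          · exact hcol 2 2 (by decide)
        intro i j
        fin_cases i <;> fin_cases j
        · exact ⟨0, phaseEq_refl _⟩
        · exact ⟨1, phaseEq_refl _⟩
        · exact ⟨2, phaseEq_refl _⟩
        · exact ⟨2, p10⟩
        · exact ⟨0, p11⟩
        · exact ⟨1, p12⟩
        · exact ⟨1, p20⟩
        · exact ⟨2, p21⟩
        · exact ⟨0, p22⟩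
    refine ⟨fun k => M 0 k, fun p => key p.1 p.2, fun k => ⟨(0, k), phaseEq_refl _⟩, ?_⟩
    intro k l hkl
    exact not_phaseEq_of_inner_zero ((hr 0).1 k) ((hr 0).2 hkl)
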